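/- Let k be a circle with center O and radius R and ω a circle with center I and radius r in the Euclidean plane ℝ², with ω strictly inside k (dist(O,I) + r < R). Then the following are equivalent: (i) there exist a line t tangent to ω and a t-pair (ω₁, ω₂) such that ω, ω₁, ω₂ have two distinct common external tangent lines; (ii) dist(O,I)² = (R − r)² − 4r². -/

import Mathlib

open RealInnerProductSpace

noncomputable section

/-- The Euclidean plane. -/
abbrev Pt := EuclideanSpace ℝ (Fin 2)

/-- `L` is a line in the plane. -/
def IsLine (L : Set Pt) : Prop :=
  ∃ P v : Pt, v ≠ 0 ∧ L = {X | ∃ t : ℝ, X = P + t • v}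

/-- The line `L` is tangent to the circle with center `P` and radius `ρ`:
the distance from `P` to `L` equals `ρ`. -/
def TangentTo (L : Set Pt) (P : Pt) (ρ : ℝ) : Prop := Metric.infDist P L = ρ

/-- All points of `S` lie strictly on the same side of the line `L`: there is a unit
normal `u` of `L` and a point `X₀ ∈ L` such that all signed distances `⟪X - X₀, u⟫`
for `X ∈ S` are strictly positive (choosing `-u` covers the other sign). -/
def StrictSameSide (L : Set Pt) (S : Set Pt) : Prop :=
  ∃ u X₀ : Pt, ‖u‖ = 1 ∧ X₀ ∈ L ∧ (∀ X ∈ L, ∀ Y ∈ L, ⟪X - Y, u⟫ = 0) ∧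
    ∀ P ∈ S, 0 < ⟪P - X₀, u⟫

/-- `L` is a common external tangent of the three circles `c₁, c₂, c₃`
(each given as a pair (center, radius)). -/
def IsCommonExternalTangent (L : Set Pt) (c₁ c₂ c₃ : Pt × ℝ) : Prop :=
  IsLine L ∧ TangentTo L c₁.1 c₁.2 ∧ TangentTo L c₂.1 c₂.2 ∧ TangentTo L c₃.1 c₃.2 ∧
    StrictSameSide L {c₁.1, c₂.1, c₃.1}

/-- Given the outer circle `(O, R)`, the inner circle `(I, r)` and a line `t` tangent to the
inner circle, `(c₁, c₂)` is a `t`-pair: two distinct circles, each externally tangent to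
`(I, r)`, internally tangent to `(O, R)`, tangent to `t`, with center strictly on the same
side of `t` as `I`. -/
def TPair (O : Pt) (R : ℝ) (I : Pt) (r : ℝ) (t : Set Pt) (c₁ c₂ : Pt × ℝ) : Prop :=
  c₁ ≠ c₂ ∧ 0 < c₁.2 ∧ 0 < c₂.2 ∧
  dist c₁.1 I = c₁.2 + r ∧ dist c₁.1 O = R - c₁.2 ∧
  dist c₂.1 I = c₂.2 + r ∧ dist c₂.1 O = R - c₂.2 ∧
  TangentTo t c₁.1 c₁.2 ∧ TangentTo t c₂.1 c₂.2 ∧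
  StrictSameSide t {I, c₁.1, c₂.1}

def rot (u : Pt) : Pt := WithLp.toLp 2 ![-u 1, u 0]

lemma inner_expand (x y : Pt) : ⟪x, y⟫ = x 0 * y 0 + x 1 * y 1 := by
  simp [PiLp.inner_apply, Fin.sum_univ_two, mul_comm]

lemma rot_zero (u : Pt) : rot u 0 = -u 1 := rfl
lemma rot_one (u : Pt) : rot u 1 = u 0 := rfl

lemma inner_rot (u : Pt) : ⟪rot u, u⟫ = 0 := by
  simp [inner_expand, rot_zero, rot_one]; ring

lemma norm_one_sq (u : Pt) (hu : ‖u‖ = 1) : u 0 ^ 2 + u 1 ^ 2 = 1 := by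
  have h := real_inner_self_eq_norm_sq u
  rw [hu, inner_expand] at h
  nlinarith [h]

lemma expand2 (u : Pt) (hu : ‖u‖ = 1) (z : Pt) :
    z = ⟪z, u⟫ • u + ⟪z, rot u⟫ • rot u := by
  have h := norm_one_sq u hu
  ext i
  fin_cases i <;>
    simp [inner_expand, rot_zero, rot_one, PiLp.add_apply, PiLp.smul_apply, smul_eq_mul] <;>
    [linear_combination (-z 0) * h; linear_combination (-z 1) * h]

lemma norm_rot (u : Pt) : ‖rot u‖ = ‖u‖ := by
  have h1 : ⟪rot u, rot u⟫ = ⟪u, u⟫ := by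
    rw [inner_expand, inner_expand, rot_zero, rot_one]; ring
  have h2 := real_inner_self_eq_norm_sq (rot u)
  have h3 := real_inner_self_eq_norm_sq u
  nlinarith [norm_nonneg u, norm_nonneg (rot u)]

lemma norm_eq_of_sq {z : Pt} {c : ℝ} (hc : 0 ≤ c) (h : ‖z‖ ^ 2 = c ^ 2) : ‖z‖ = c := by
  nlinarith [norm_nonneg z]

lemma norm_comb_sq (u v : Pt) (hu : ‖u‖ = 1) (hv : ‖v‖ = 1) (huv : ⟪u, v⟫ = 0)
    (a b : ℝ) : ‖a • u + b • v‖ ^ 2 = a ^ 2 + b ^ 2 := by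
  have h2 := norm_one_sq u hu
  have h3 := norm_one_sq v hv
  have h4 : u 0 * v 0 + u 1 * v 1 = 0 := by rw [inner_expand] at huv; linarith
  rw [← real_inner_self_eq_norm_sq, inner_expand]
  simp only [PiLp.add_apply, PiLp.smul_apply, smul_eq_mul]
  linear_combination a ^ 2 * h2 + b ^ 2 * h3 + 2 * a * b * h4

lemma infDist_line (P w u : Pt) (hw : w ≠ 0) (hu : ‖u‖ = 1) (hwu : ⟪w, u⟫ = 0)
    (X : Pt) :
    Metric.infDist X {Y | ∃ s : ℝ, Y = P + s • w} = |⟪X - P, u⟫| := by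
  have hne : Set.Nonempty {Y | ∃ s : ℝ, Y = P + s • w} := ⟨P, 0, by simp⟩
  have hγ : ⟪w, rot u⟫ ≠ 0 := by
    intro h0
    apply hw
    have := expand2 u hu w
    rw [hwu, h0] at this
    simpa using this
  apply le_antisymm
  · -- choose the foot point
    set γ := ⟪w, rot u⟫ with hγdef
    set a := ⟪X - P, u⟫ with ha
    set b := ⟪X - P, rot u⟫ with hb
    have hx : X - P = a • u + b • rot u := expand2 u hu (X - P)
    have hwrot : w = γ • rot u := by
      have := expand2 u hu w
      rwa [hwu, zero_smul, zero_add] at this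
    have hmem : P + (b / γ) • w ∈ {Y | ∃ s : ℝ, Y = P + s • w} :=
      ⟨_, rfl⟩
    calc Metric.infDist X {Y | ∃ s : ℝ, Y = P + s • w}
        ≤ dist X (P + (b / γ) • w) := Metric.infDist_le_dist_of_mem hmem
      _ = |a| := by
          rw [dist_eq_norm]
          have : X - (P + (b / γ) • w) = a • u := by
            have h2 : (b / γ) • w = b • rot u := by
              rw [hwrot, smul_smul, div_mul_cancel₀ _ hγ]
            rw [h2]
            rw [show X - (P + b • rot u) = (X - P) - b • rot u by abel]
            rw [hx]; abel
          rw [this, norm_smul, hu]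
          simp
  · rw [Metric.infDist_eq_iInf]
    have : Nonempty {Y | ∃ s : ℝ, Y = P + s • w} := hne.to_subtype
    apply le_ciInf
    rintro ⟨Y, s, rfl⟩
    have h1 : ⟪X - (P + s • w), u⟫ = ⟪X - P, u⟫ := by
      rw [show X - (P + s • w) = (X - P) - s • w by abel]
      rw [inner_sub_left, real_inner_smul_left, hwu]
      ring
    calc |⟪X - P, u⟫| = |⟪X - (P + s • w), u⟫| := by rw [h1]
      _ ≤ ‖X - (P + s • w)‖ * ‖u‖ := abs_real_inner_le_norm _ _
      _ = dist X (P + s • w) := by rw [hu, mul_one, dist_eq_norm]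

lemma line_shift (P w : Pt) (s₀ : ℝ) :
    {X | ∃ s : ℝ, X = P + s • w} = {X | ∃ s : ℝ, X = (P + s₀ • w) + s • w} := by
  ext X
  constructor
  · rintro ⟨s, rfl⟩; exact ⟨s - s₀, by rw [sub_smul]; abel⟩
  · rintro ⟨s, rfl⟩; exact ⟨s₀ + s, by rw [add_smul]; abel⟩

lemma line_eq (Y₁ Y₂ w₁ w₂ n : Pt) (hn : ‖n‖ = 1) (h1 : w₁ ≠ 0) (h2 : w₂ ≠ 0)
    (hw1 : ⟪w₁, n⟫ = 0) (hw2 : ⟪w₂, n⟫ = 0) (hY : ⟪Y₁ - Y₂, n⟫ = 0) :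
    {X | ∃ s : ℝ, X = Y₁ + s • w₁} = {X | ∃ s : ℝ, X = Y₂ + s • w₂} := by
  have hγ : ∀ w : Pt, w ≠ 0 → ⟪w, n⟫ = 0 → (⟪w, rot n⟫ ≠ 0 ∧ w = ⟪w, rot n⟫ • rot n) := by
    intro w hw hwn
    have he := expand2 n hn w
    rw [hwn, zero_smul, zero_add] at he
    refine ⟨fun h0 => hw ?_, he⟩
    rw [he, h0, zero_smul]
  obtain ⟨hγ1, he1⟩ := hγ w₁ h1 hw1
  obtain ⟨hγ2, he2⟩ := hγ w₂ h2 hw2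
  set γ₁ := ⟪w₁, rot n⟫ with hγ₁def
  set γ₂ := ⟪w₂, rot n⟫ with hγ₂def
  have hYd : Y₁ - Y₂ = ⟪Y₁ - Y₂, rot n⟫ • rot n := by
    have he := expand2 n hn (Y₁ - Y₂)
    rwa [hY, zero_smul, zero_add] at he
  set c := ⟪Y₁ - Y₂, rot n⟫
  ext X
  constructor
  · rintro ⟨s, rfl⟩
    refine ⟨(c + s * γ₁) / γ₂, ?_⟩
    rw [he2, smul_smul, div_mul_cancel₀ _ hγ2, add_smul, ← hYd]
    rw [he1, smul_smul]; abel
  · rintro ⟨s, rfl⟩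
    refine ⟨(-c + s * γ₂) / γ₁, ?_⟩
    rw [he1, smul_smul, div_mul_cancel₀ _ hγ1, add_smul, neg_smul, ← hYd]
    rw [he2, smul_smul]; abel

theorem reverse_dir
    (O I : Pt) (R r : ℝ) (hr : 0 < r) (hR : 0 < R)
    (hinside : dist O I + r < R)
    (hd : dist O I ^ 2 = (R - r) ^ 2 - 4 * r ^ 2) :
    (∃ t : Set Pt, IsLine t ∧ TangentTo t I r ∧
      ∃ c₁ c₂ : Pt × ℝ, TPair O R I r t c₁ c₂ ∧
        ∃ u₁ u₂ : Set Pt, u₁ ≠ u₂ ∧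
          IsCommonExternalTangent u₁ (I, r) c₁ c₂ ∧
          IsCommonExternalTangent u₂ (I, r) c₁ c₂) := by
  set dOI := dist O I with hdd
  have hd0 : (0:ℝ) ≤ dOI := dist_nonneg
  have hrR : r < R := by linarith
  obtain ⟨u, hu, hO⟩ : ∃ u : Pt, ‖u‖ = 1 ∧ O = I + dOI • u := by
    by_cases h : O = I
    · refine ⟨!₂[1, 0], ?_, ?_⟩
      · apply norm_eq_of_sq (le_refl 0 |>.trans zero_le_one)
        rw [← real_inner_self_eq_norm_sq, inner_expand]
        norm_num
      · rw [hdd, h, dist_self]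
        simp
    · have hne : ‖O - I‖ ≠ 0 := norm_ne_zero_iff.mpr (sub_ne_zero.mpr h)
      refine ⟨‖O - I‖⁻¹ • (O - I), ?_, ?_⟩
      · rw [norm_smul, Real.norm_eq_abs, abs_inv, abs_norm, inv_mul_cancel₀ hne]
      · rw [hdd, dist_eq_norm, smul_inv_smul₀ hne]
        abel
  have hvu : ⟪rot u, u⟫ = 0 := inner_rot u
  have huv : ⟪u, rot u⟫ = 0 := by rw [real_inner_comm]; exact hvu
  have hv : ‖rot u‖ = 1 := by rw [norm_rot, hu]
  have hvne : rot u ≠ 0 := by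
    intro h; rw [h] at hv; simp at hv
  have huu : ⟪u, u⟫ = 1 := by rw [real_inner_self_eq_norm_sq, hu]; norm_num
  have hvv : ⟪rot u, rot u⟫ = 1 := by rw [real_inner_self_eq_norm_sq, hv]; norm_num
  have hipu : ∀ a b : ℝ, ⟪a • u + b • rot u, u⟫ = a := by
    intro a b
    rw [inner_add_left, real_inner_smul_left, real_inner_smul_left, huu, hvu]; ring
  have hipv : ∀ a b : ℝ, ⟪a • u + b • rot u, rot u⟫ = b := by
    intro a b
    rw [inner_add_left, real_inner_smul_left, real_inner_smul_left, huv, hvv]; ring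
  have htanH : ∀ (P₀ X : Pt) (a b : ℝ), X - P₀ = a • u + b • rot u →
      Metric.infDist X {Y | ∃ s : ℝ, Y = P₀ + s • rot u} = |a| := by
    intro P₀ X a b hX
    rw [infDist_line P₀ (rot u) u hvne hu hvu X, hX, hipu]
  have hdistH : ∀ (X Y : Pt) (a b c : ℝ), X - Y = a • u + b • rot u → 0 ≤ c →
      a ^ 2 + b ^ 2 = c ^ 2 → dist X Y = c := by
    intro X Y a b c hXY hc hsq
    rw [dist_eq_norm, hXY]
    exact norm_eq_of_sq hc (by rw [norm_comb_sq u (rot u) hu hv huv]; exact hsq)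
  set J₁ := I + (2 * r) • rot u with hJ₁
  set J₂ := I - (2 * r) • rot u with hJ₂
  set tset := {X | ∃ s : ℝ, X = (I - r • u) + s • rot u} with htset
  set u2set := {X | ∃ s : ℝ, X = (I + r • u) + s • rot u} with hu2set
  have hRr2 : dOI ^ 2 + (2*r)^2 = (R - r)^2 := by linear_combination hd
  -- strict same side for tset
  have hsds_t : StrictSameSide tset {I, J₁, J₂} := by
    refine ⟨u, I - r • u, hu, ⟨0, by simp⟩, ?_, ?_⟩
    · rintro X ⟨s, rfl⟩ Y ⟨s', rfl⟩
      rw [show (I - r • u + s • rot u) - (I - r • u + s' • rot u)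
          = (0:ℝ) • u + (s - s') • rot u by module, hipu]
    · rintro Z hZ
      simp only [Set.mem_insert_iff, Set.mem_singleton_iff] at hZ
      rcases hZ with rfl | rfl | rfl
      · rw [show Z - (Z - r • u) = r • u + (0:ℝ) • rot u by module, hipu]; exact hr
      · rw [hJ₁, show (I + (2*r) • rot u) - (I - r • u) = r • u + (2*r) • rot u by module,
          hipu]; exact hr
      · rw [hJ₂, show (I - (2*r) • rot u) - (I - r • u) = r • u + (-(2*r)) • rot u by module,
          hipu]; exact hr
  have hsds_u2 : StrictSameSide u2set {I, J₁, J₂} := by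
    refine ⟨-u, I + r • u, by rw [norm_neg, hu], ⟨0, by simp⟩, ?_, ?_⟩
    · rintro X ⟨s, rfl⟩ Y ⟨s', rfl⟩
      rw [inner_neg_right, show (I + r • u + s • rot u) - (I + r • u + s' • rot u)
          = (0:ℝ) • u + (s - s') • rot u by module, hipu, neg_zero]
    · rintro Z hZ
      simp only [Set.mem_insert_iff, Set.mem_singleton_iff] at hZ
      rcases hZ with rfl | rfl | rfl
      · rw [inner_neg_right, show Z - (Z + r • u) = (-r) • u + (0:ℝ) • rot u by module, hipu]
        linarith
      · rw [inner_neg_right, hJ₁, show (I + (2*r) • rot u) - (I + r • u)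
          = (-r) • u + (2*r) • rot u by module, hipu]; linarith
      · rw [inner_neg_right, hJ₂, show (I - (2*r) • rot u) - (I + r • u)
          = (-r) • u + (-(2*r)) • rot u by module, hipu]; linarith
  have htanI : TangentTo tset I r := by
    show Metric.infDist I tset = r
    rw [htset, htanH (I - r • u) I r 0 (by module)]
    exact abs_of_pos hr
  have htanJ₁ : TangentTo tset J₁ r := by
    show Metric.infDist J₁ tset = r
    rw [htset, htanH (I - r • u) J₁ r (2*r) (by rw [hJ₁]; module)]
    exact abs_of_pos hr
  have htanJ₂ : TangentTo tset J₂ r := by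
    show Metric.infDist J₂ tset = r
    rw [htset, htanH (I - r • u) J₂ r (-(2*r)) (by rw [hJ₂]; module)]
    exact abs_of_pos hr
  have htanI2 : TangentTo u2set I r := by
    show Metric.infDist I u2set = r
    rw [hu2set, htanH (I + r • u) I (-r) 0 (by module)]
    rw [abs_neg]; exact abs_of_pos hr
  have htanJ₁2 : TangentTo u2set J₁ r := by
    show Metric.infDist J₁ u2set = r
    rw [hu2set, htanH (I + r • u) J₁ (-r) (2*r) (by rw [hJ₁]; module)]
    rw [abs_neg]; exact abs_of_pos hr
  have htanJ₂2 : TangentTo u2set J₂ r := by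
    show Metric.infDist J₂ u2set = r
    rw [hu2set, htanH (I + r • u) J₂ (-r) (-(2*r)) (by rw [hJ₂]; module)]
    rw [abs_neg]; exact abs_of_pos hr
  have hdJ₁I : dist J₁ I = r + r := by
    apply hdistH J₁ I 0 (2*r) (r + r) (by rw [hJ₁]; module) (by linarith)
    ring
  have hdJ₂I : dist J₂ I = r + r := by
    apply hdistH J₂ I 0 (-(2*r)) (r + r) (by rw [hJ₂]; module) (by linarith)
    ring
  have hdJ₁O : dist J₁ O = R - r := by
    apply hdistH J₁ O (-dOI) (2*r) (R - r) (by rw [hJ₁, hO]; module) (by linarith)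
    linear_combination hRr2
  have hdJ₂O : dist J₂ O = R - r := by
    apply hdistH J₂ O (-dOI) (-(2*r)) (R - r) (by rw [hJ₂, hO]; module) (by linarith)
    linear_combination hRr2
  have hc12 : ((J₁, r) : Pt × ℝ) ≠ (J₂, r) := by
    intro h
    have hf : J₁ = J₂ := congrArg Prod.fst h
    have e1 := congrArg (fun X => ⟪X - I, rot u⟫) hf
    simp only [hJ₁, hJ₂] at e1
    rw [show (I + (2*r) • rot u) - I = (0:ℝ) • u + (2*r) • rot u by module, hipv,
      show (I - (2*r) • rot u) - I = (0:ℝ) • u + (-(2*r)) • rot u by module, hipv] at e1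
    linarith
  have htne : tset ≠ u2set := by
    intro h
    have hmem : (I - r • u) ∈ tset := ⟨0, by simp⟩
    rw [h] at hmem
    obtain ⟨s, hs⟩ := hmem
    have e := congrArg (fun X => ⟪X - I, u⟫) hs
    rw [show (I - r • u) - I = (-r) • u + (0:ℝ) • rot u by module, hipu,
      show (I + r • u + s • rot u) - I = r • u + s • rot u by module, hipu] at e
    linarith
  refine ⟨tset, ⟨I - r • u, rot u, hvne, rfl⟩, htanI, (J₁, r), (J₂, r),
    ⟨hc12, hr, hr, hdJ₁I, hdJ₁O, hdJ₂I, hdJ₂O, htanJ₁, htanJ₂, hsds_t⟩,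
    tset, u2set, htne,
    ⟨⟨I - r • u, rot u, hvne, rfl⟩, htanI, htanJ₁, htanJ₂, hsds_t⟩,
    ⟨⟨I + r • u, rot u, hvne, rfl⟩, htanI2, htanJ₁2, htanJ₂2, hsds_u2⟩⟩


theorem forward_dir
    (O I : Pt) (R r : ℝ) (hr : 0 < r) (hR : 0 < R)
    (hinside : dist O I + r < R)
    (h : ∃ t : Set Pt, IsLine t ∧ TangentTo t I r ∧
      ∃ c₁ c₂ : Pt × ℝ, TPair O R I r t c₁ c₂ ∧
        ∃ u₁ u₂ : Set Pt, u₁ ≠ u₂ ∧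
          IsCommonExternalTangent u₁ (I, r) c₁ c₂ ∧
          IsCommonExternalTangent u₂ (I, r) c₁ c₂) :
    dist O I ^ 2 = (R - r) ^ 2 - 4 * r ^ 2 := by
  obtain ⟨t, htline, htangI, c₁, c₂, hpair, u₁, u₂, hu12, hext₁, hext₂⟩ := h
  obtain ⟨J₁, r₁⟩ := c₁
  obtain ⟨J₂, r₂⟩ := c₂
  obtain ⟨hc12, hr₁, hr₂, hd1I, hd1O, hd2I, hd2O, htan1, htan2, hside⟩ := hpair
  simp only at hc12 hr₁ hr₂ hd1I hd1O hd2I hd2O htan1 htan2 hside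
  obtain ⟨u, X₀, hu, hX₀t, hperp, hpos⟩ := hside
  obtain ⟨P, w, hw, ht⟩ := htline
  subst ht
  obtain ⟨s₀, hX₀⟩ := hX₀t
  have hwu : ⟪w, u⟫ = 0 := by
    have h1 := hperp (P + (1:ℝ) • w) ⟨1, rfl⟩ (P + (0:ℝ) • w) ⟨0, rfl⟩
    rwa [show (P + (1:ℝ) • w) - (P + (0:ℝ) • w) = w by module] at h1
  have hvu : ⟪rot u, u⟫ = 0 := inner_rot u
  have huv : ⟪u, rot u⟫ = 0 := by rw [real_inner_comm]; exact hvu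
  have hv : ‖rot u‖ = 1 := by rw [norm_rot, hu]
  -- heights with respect to t
  have hinf : ∀ Z : Pt, Metric.infDist Z {X | ∃ s : ℝ, X = P + s • w} = |⟪Z - X₀, u⟫| := by
    intro Z
    rw [infDist_line P w u hw hu hwu Z]
    congr 1
    rw [show Z - P = (Z - X₀) + s₀ • w by rw [hX₀]; module,
      inner_add_left, real_inner_smul_left, hwu]
    ring
  have hIh : ⟪I - X₀, u⟫ = r := by
    have h1 : |⟪I - X₀, u⟫| = r := by rw [← hinf]; exact htangI
    rwa [abs_of_pos (hpos I (by simp))] at h1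
  have h1h : ⟪J₁ - X₀, u⟫ = r₁ := by
    have h1 : |⟪J₁ - X₀, u⟫| = r₁ := by rw [← hinf]; exact htan1
    rwa [abs_of_pos (hpos J₁ (by simp))] at h1
  have h2h : ⟪J₂ - X₀, u⟫ = r₂ := by
    have h1 : |⟪J₂ - X₀, u⟫| = r₂ := by rw [← hinf]; exact htan2
    rwa [abs_of_pos (hpos J₂ (by simp))] at h1
  -- coordinates
  set x₁ := ⟪J₁ - I, rot u⟫ with hx₁def
  set x₂ := ⟪J₂ - I, rot u⟫ with hx₂def
  set p := ⟪O - I, rot u⟫ with hpdef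
  set q := ⟪O - X₀, u⟫ with hqdef
  have hJ₁u : ⟪J₁ - I, u⟫ = r₁ - r := by
    rw [show J₁ - I = (J₁ - X₀) - (I - X₀) by module, inner_sub_left, h1h, hIh]
  have hJ₂u : ⟪J₂ - I, u⟫ = r₂ - r := by
    rw [show J₂ - I = (J₂ - X₀) - (I - X₀) by module, inner_sub_left, h2h, hIh]
  have hOu : ⟪O - I, u⟫ = q - r := by
    rw [show O - I = (O - X₀) - (I - X₀) by module, inner_sub_left, hIh, ← hqdef]
  have hJ₁dec : J₁ - I = (r₁ - r) • u + x₁ • rot u := by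
    have h1 := expand2 u hu (J₁ - I); rwa [hJ₁u, ← hx₁def] at h1
  have hJ₂dec : J₂ - I = (r₂ - r) • u + x₂ • rot u := by
    have h1 := expand2 u hu (J₂ - I); rwa [hJ₂u, ← hx₂def] at h1
  have hOdec : O - I = (q - r) • u + p • rot u := by
    have h1 := expand2 u hu (O - I); rwa [hOu, ← hpdef] at h1
  -- squared distances
  have hsq : ∀ (X Y : Pt) (a b c : ℝ), X - Y = a • u + b • rot u → dist X Y = c →
      a ^ 2 + b ^ 2 = c ^ 2 := by
    intro X Y a b c hXY hc
    have h1 := norm_comb_sq u (rot u) hu hv huv a b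
    rw [← hXY, ← dist_eq_norm, hc] at h1
    exact h1.symm
  have hE1 : (r₁ - r) ^ 2 + x₁ ^ 2 = (r₁ + r) ^ 2 := hsq _ _ _ _ _ hJ₁dec hd1I
  have hE2 : (r₂ - r) ^ 2 + x₂ ^ 2 = (r₂ + r) ^ 2 := hsq _ _ _ _ _ hJ₂dec hd2I
  have he1 : x₁ ^ 2 = 4 * r * r₁ := by linear_combination hE1
  have he2 : x₂ ^ 2 = 4 * r * r₂ := by linear_combination hE2
  have hF1 : (r₁ - q) ^ 2 + (x₁ - p) ^ 2 = (R - r₁) ^ 2 := by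
    refine hsq J₁ O (r₁ - q) (x₁ - p) (R - r₁) ?_ hd1O
    rw [show J₁ - O = (J₁ - I) - (O - I) by module, hJ₁dec, hOdec]; module
  have hF2 : (r₂ - q) ^ 2 + (x₂ - p) ^ 2 = (R - r₂) ^ 2 := by
    refine hsq J₂ O (r₂ - q) (x₂ - p) (R - r₂) ?_ hd2O
    rw [show J₂ - O = (J₂ - I) - (O - I) by module, hJ₂dec, hOdec]; module
  have hdOI : dist O I ^ 2 = (q - r) ^ 2 + p ^ 2 := by
    have h1 := hsq O I (q - r) p (dist O I) hOdec rfl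
    linarith
  -- process the two external tangents
  have key : ∀ L : Set Pt, IsCommonExternalTangent L (I, r) (J₁, r₁) (J₂, r₂) →
      ∃ n Y wn : Pt, ‖n‖ = 1 ∧ wn ≠ 0 ∧ ⟪wn, n⟫ = 0 ∧
        L = {X | ∃ s : ℝ, X = Y + s • wn} ∧
        ⟪I - Y, n⟫ = r ∧ ⟪J₁ - Y, n⟫ = r₁ ∧ ⟪J₂ - Y, n⟫ = r₂ := by
    rintro L ⟨⟨Q, wn, hwn, rfl⟩, htI, ht1, ht2, n, Y, hn, hYmem, hperp', hpos'⟩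
    simp only at htI ht1 ht2 hpos'
    obtain ⟨sY, hY⟩ := hYmem
    have hwnn : ⟪wn, n⟫ = 0 := by
      have h1 := hperp' (Q + (1:ℝ) • wn) ⟨1, rfl⟩ (Q + (0:ℝ) • wn) ⟨0, rfl⟩
      rwa [show (Q + (1:ℝ) • wn) - (Q + (0:ℝ) • wn) = wn by module] at h1
    have hinf' : ∀ Z : Pt,
        Metric.infDist Z {X | ∃ s : ℝ, X = Q + s • wn} = |⟪Z - Y, n⟫| := by
      intro Z
      rw [infDist_line Q wn n hwn hn hwnn Z]
      congr 1
      rw [show Z - Q = (Z - Y) + sY • wn by rw [hY]; module,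
        inner_add_left, real_inner_smul_left, hwnn]
      ring
    refine ⟨n, Y, wn, hn, hwn, hwnn, by rw [hY]; exact line_shift Q wn sY, ?_, ?_, ?_⟩
    · have h1 : |⟪I - Y, n⟫| = r := by rw [← hinf']; exact htI
      rwa [abs_of_pos (hpos' I (by simp))] at h1
    · have h1 : |⟪J₁ - Y, n⟫| = r₁ := by rw [← hinf']; exact ht1
      rwa [abs_of_pos (hpos' J₁ (by simp))] at h1
    · have h1 : |⟪J₂ - Y, n⟫| = r₂ := by rw [← hinf']; exact ht2
      rwa [abs_of_pos (hpos' J₂ (by simp))] at h1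
  obtain ⟨n₁, Y₁, w₁, hn₁, hw₁, hw₁n, hL₁, gI₁, g1₁, g2₁⟩ := key u₁ hext₁
  obtain ⟨n₂, Y₂, w₂, hn₂, hw₂, hw₂n, hL₂, gI₂, g1₂, g2₂⟩ := key u₂ hext₂
  have hnne : n₁ ≠ n₂ := by
    rintro rfl
    apply hu12
    rw [hL₁, hL₂]
    refine line_eq Y₁ Y₂ w₁ w₂ n₁ hn₁ hw₁ hw₂ hw₁n hw₂n ?_
    rw [show Y₁ - Y₂ = (I - Y₂) - (I - Y₁) by module, inner_sub_left, gI₂, gI₁, sub_self]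
  have hm : n₁ - n₂ ≠ 0 := sub_ne_zero.mpr hnne
  have gg1 : ⟪J₁ - I, n₁ - n₂⟫ = 0 := by
    have a1 : ⟪J₁ - I, n₁⟫ = r₁ - r := by
      rw [show J₁ - I = (J₁ - Y₁) - (I - Y₁) by module, inner_sub_left, g1₁, gI₁]
    have a2 : ⟪J₁ - I, n₂⟫ = r₁ - r := by
      rw [show J₁ - I = (J₁ - Y₂) - (I - Y₂) by module, inner_sub_left, g1₂, gI₂]
    rw [inner_sub_right, a1, a2, sub_self]
  have gg2 : ⟪J₂ - I, n₁ - n₂⟫ = 0 := by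
    have a1 : ⟪J₂ - I, n₁⟫ = r₂ - r := by
      rw [show J₂ - I = (J₂ - Y₁) - (I - Y₁) by module, inner_sub_left, g2₁, gI₁]
    have a2 : ⟪J₂ - I, n₂⟫ = r₂ - r := by
      rw [show J₂ - I = (J₂ - Y₂) - (I - Y₂) by module, inner_sub_left, g2₂, gI₂]
    rw [inner_sub_right, a1, a2, sub_self]
  set α := ⟪n₁ - n₂, u⟫ with hαdef
  set β := ⟪n₁ - n₂, rot u⟫ with hβdef
  have hmdec : n₁ - n₂ = α • u + β • rot u := by
    have h1 := expand2 u hu (n₁ - n₂); rwa [← hαdef, ← hβdef] at h1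
  have eqA : α * (r₁ - r) + β * x₁ = 0 := by
    have h1 : ⟪J₁ - I, n₁ - n₂⟫ = α * (r₁ - r) + β * x₁ := by
      conv_lhs => rw [hmdec]
      rw [inner_add_right, real_inner_smul_right, real_inner_smul_right, hJ₁u, ← hx₁def]
    rw [← h1, gg1]
  have eqB : α * (r₂ - r) + β * x₂ = 0 := by
    have h1 : ⟪J₂ - I, n₁ - n₂⟫ = α * (r₂ - r) + β * x₂ := by
      conv_lhs => rw [hmdec]
      rw [inner_add_right, real_inner_smul_right, real_inner_smul_right, hJ₂u, ← hx₂def]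
    rw [← h1, gg2]
  have hαβ : α ≠ 0 ∨ β ≠ 0 := by
    by_contra hcon
    push_neg at hcon
    apply hm
    rw [hmdec, hcon.1, hcon.2, zero_smul, zero_smul, add_zero]
  have hdet : (r₁ - r) * x₂ - (r₂ - r) * x₁ = 0 := by
    by_contra hd0
    have hα : α * ((r₁ - r) * x₂ - (r₂ - r) * x₁) = 0 := by
      linear_combination x₂ * eqA - x₁ * eqB
    have hβ : β * ((r₁ - r) * x₂ - (r₂ - r) * x₁) = 0 := by
      linear_combination (r₁ - r) * eqB - (r₂ - r) * eqA
    rcases hαβ with h' | h'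
    · exact h' (by rcases mul_eq_zero.mp hα with h'' | h'' <;> [exact h''; exact absurd h'' hd0])
    · exact h' (by rcases mul_eq_zero.mp hβ with h'' | h'' <;> [exact h''; exact absurd h'' hd0])
  have hx12 : x₁ ≠ x₂ := by
    intro hxe
    have h4 : 4 * r * r₁ = 4 * r * r₂ := by rw [← he1, ← he2, hxe]
    have hr12 : r₁ = r₂ := mul_left_cancel₀ (by positivity : (4:ℝ) * r ≠ 0) h4
    apply hc12
    have hJJ : J₁ - J₂ = 0 := by
      rw [show J₁ - J₂ = (J₁ - I) - (J₂ - I) by module, hJ₁dec, hJ₂dec, hr12, hxe]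
      module
    rw [Prod.ext_iff]
    exact ⟨sub_eq_zero.mp hJJ, hr12⟩
  -- final algebra
  have hprod : x₁ * x₂ = -(4 * r ^ 2) := by
    have h0 : (x₁ - x₂) * (x₁ * x₂ + 4 * r ^ 2) = 0 := by
      linear_combination 4 * r * hdet + x₂ * he1 - x₁ * he2
    rcases mul_eq_zero.mp h0 with h' | h'
    · exact absurd (sub_eq_zero.mp h') hx12
    · linarith
  have g1 : (R - q + 2 * r) * x₁ ^ 2 - 4 * r * p * x₁ + 2 * r * (q ^ 2 + p ^ 2 - R ^ 2) = 0 := by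
    linear_combination 2 * r * hF1 + (R - q) * he1
  have g2 : (R - q + 2 * r) * x₂ ^ 2 - 4 * r * p * x₂ + 2 * r * (q ^ 2 + p ^ 2 - R ^ 2) = 0 := by
    linear_combination 2 * r * hF2 + (R - q) * he2
  have hsum : (R - q + 2 * r) * (x₁ + x₂) = 4 * r * p := by
    have h0 : (x₁ - x₂) * ((R - q + 2 * r) * (x₁ + x₂) - 4 * r * p) = 0 := by
      linear_combination g1 - g2
    rcases mul_eq_zero.mp h0 with h' | h'
    · exact absurd (sub_eq_zero.mp h') hx12
    · linarith
  have hE : q ^ 2 + p ^ 2 - R ^ 2 = -(2 * r * (R - q + 2 * r)) := by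
    have hrne : (2 * r) ≠ 0 := by positivity
    have h0 : 2 * r * (q ^ 2 + p ^ 2 - R ^ 2) = 2 * r * (-(2 * r * (R - q + 2 * r))) := by
      linear_combination g1 - x₁ * hsum + (R - q + 2 * r) * hprod
    exact mul_left_cancel₀ hrne h0
  rw [hdOI]
  linear_combination hE

/-- **Euler-type characterization.** The circles `ω, ω₁, ω₂` of some `t`-pair have two
distinct common external tangents for some tangent line `t` of `ω` if and only if
`dist O I ^ 2 = (R - r) ^ 2 - 4 r ^ 2`. -/
theorem sangaku_euler_characterization
    (O I : Pt) (R r : ℝ) (hr : 0 < r) (hR : 0 < R)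
    (hinside : dist O I + r < R) :
    (∃ t : Set Pt, IsLine t ∧ TangentTo t I r ∧
      ∃ c₁ c₂ : Pt × ℝ, TPair O R I r t c₁ c₂ ∧
        ∃ u₁ u₂ : Set Pt, u₁ ≠ u₂ ∧
          IsCommonExternalTangent u₁ (I, r) c₁ c₂ ∧
          IsCommonExternalTangent u₂ (I, r) c₁ c₂) ↔
    dist O I ^ 2 = (R - r) ^ 2 - 4 * r ^ 2 := by
  constructor
  · exact forward_dir O I R r hr hR hinside
  · exact reverse_dir O I R r hr hR hinside
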